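/- For every countable family {A_n : n ∈ ω} of infinite antichains in ω^{<ω}, there exists an antichain B ⊆ ω^{<ω} such that B ∩ A_n is infinite for infinitely many n. -/

import Mathlib

/-- Comparability in the tree `ω^{<ω}` ordered by end-extension. -/
def Compar (s t : List ℕ) : Prop := s <+: t ∨ t <+: s

namespace Stmt1

lemma compar_refl (s : List ℕ) : Compar s s := Or.inl (List.prefix_refl s)

lemma compar_symm {s t : List ℕ} (h : Compar s t) : Compar t s := h.symm

def val (l : List ℕ) (p : ℕ) : ℕ := l.getD p 0

lemma val_prefix {s t : List ℕ} (h : s <+: t) {p : ℕ} (hp : p < s.length) :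
    val s p = val t p := by
  rw [val, val, List.getD_eq_getElem _ _ hp, List.getD_eq_getElem _ _ (hp.trans_le h.length_le)]
  exact h.getElem hp

lemma not_compar {s t : List ℕ} {p : ℕ} (hs : p < s.length) (ht : p < t.length)
    (h : val s p ≠ val t p) : ¬ Compar s t := by
  rintro (hc | hc)
  · exact h (val_prefix hc hs)
  · exact h (val_prefix hc ht).symm

lemma prefix_of_val {u x : List ℕ} (hl : u.length ≤ x.length)
    (h : ∀ p < u.length, val u p = val x p) : u <+: x := by
  have : u = x.take u.length := by
    apply List.ext_getElem
    · simp [Nat.min_eq_left hl]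
    · intro i h1 h2
      have hv := h i h1
      rw [val, val, List.getD_eq_getElem _ _ h1, List.getD_eq_getElem _ _ (h1.trans_le hl)] at hv
      simpa using hv
  rw [this]; exact List.take_prefix _ _

lemma eq_of_val {u x : List ℕ} (hl : u.length = x.length)
    (h : ∀ p < u.length, val u p = val x p) : u = x :=
  (prefix_of_val hl.le h).eq_of_length hl

/-! ### Case data -/

def FanData (Y : ℕ → List ℕ) (q : ℕ) : Prop :=
  (∀ i, q < (Y i).length) ∧ StrictMono (fun i => val (Y i) q) ∧
    ∀ i i' p, p < q → val (Y i) p = val (Y i') p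

def DivData (Y : ℕ → List ℕ) (g : ℕ → ℕ) (e : ℕ → ℕ) : Prop :=
  StrictMono e ∧ ∀ i, e i < (Y i).length ∧ (∀ p < e i, val (Y i) p = g p) ∧
    val (Y i) (e i) ≠ g (e i)

def ChainData (Y : ℕ → List ℕ) : Prop :=
  ∀ i i', i < i' → Y i <+: Y i' ∧ (Y i).length < (Y i').length

lemma FanData.not_compar' {Y : ℕ → List ℕ} {q : ℕ} (h : FanData Y q) {i i' : ℕ}
    (hne : i ≠ i') : ¬ Compar (Y i) (Y i') :=
  not_compar (h.1 i) (h.1 i') (h.2.1.injective.ne hne)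

lemma DivData.not_compar' {Y : ℕ → List ℕ} {g e : ℕ → ℕ} (h : DivData Y g e) {i i' : ℕ}
    (hne : i ≠ i') : ¬ Compar (Y i) (Y i') := by
  have key : ∀ a b : ℕ, a < b → ¬ Compar (Y a) (Y b) := by
    intro a b hab
    apply not_compar (h.2 a).1 (lt_trans (h.1 hab) (h.2 b).1)
    rw [(h.2 b).2.1 (e a) (h.1 hab)]
    exact (h.2 a).2.2
  rcases hne.lt_or_gt with hl | hl
  · exact key _ _ hl
  · exact fun hc => key _ _ hl (compar_symm hc)

lemma FanData.comp {Y : ℕ → List ℕ} {q : ℕ} (h : FanData Y q) {φ : ℕ → ℕ}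
    (hφ : StrictMono φ) : FanData (fun i => Y (φ i)) q :=
  ⟨fun i => h.1 _, h.2.1.comp hφ, fun i i' p hp => h.2.2 _ _ p hp⟩

lemma DivData.comp {Y : ℕ → List ℕ} {g e : ℕ → ℕ} (h : DivData Y g e) {φ : ℕ → ℕ}
    (hφ : StrictMono φ) : DivData (fun i => Y (φ i)) g (fun i => e (φ i)) :=
  ⟨h.1.comp hφ, fun i => h.2 _⟩

/-! ### Recursive selection helper -/

lemma rec_seq {α : Sort*} (r : α → α → Prop) (a0 : α) (h : ∀ a, ∃ b, r a b) :
    ∃ f : ℕ → α, f 0 = a0 ∧ ∀ k, r (f k) (f (k + 1)) := by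
  choose nxt hn using h
  exact ⟨fun k => Nat.rec a0 (fun _ a => nxt a) k, rfl, fun k => hn _⟩

lemma fiber_dichotomy {β : Type*} (f : ℕ → β) :
    (∃ b, {j | f j = b}.Infinite) ∨
      (∃ τ : ℕ → ℕ, Function.Injective τ ∧ Function.Injective (f ∘ τ)) := by
  by_cases hf : ∃ b, {j | f j = b}.Infinite
  · exact Or.inl hf
  push_neg at hf
  right
  have step : ∀ a : ℕ, ∃ b, a < b ∧ ∀ c ≤ a, f c ≠ f b := by
    intro a
    have hbad : {b : ℕ | b ≤ a ∨ ∃ c ≤ a, f b = f c}.Finite := by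
      apply Set.Finite.union (Set.finite_le_nat a)
      have : {b : ℕ | ∃ c ≤ a, f b = f c} ⊆ ⋃ c ∈ Finset.range (a + 1), {j | f j = f c} := by
        rintro b ⟨c, hc, hb⟩
        exact Set.mem_biUnion (Finset.mem_range.2 (Nat.lt_succ_of_le hc)) hb
      exact (Set.Finite.biUnion (Finset.range (a + 1)).finite_toSet (fun c _ => hf (f c))).subset this
    obtain ⟨b, hb⟩ := hbad.infinite_compl.nonempty
    simp only [Set.mem_compl_iff, Set.mem_setOf_eq, not_or, not_exists, not_le] at hb
    push_neg at hb
    exact ⟨b, hb.1, fun c hc h => hb.2 c hc h.symm⟩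
  obtain ⟨τ, -, hτ⟩ := rec_seq (fun a b => a < b ∧ ∀ c ≤ a, f c ≠ f b) 0 step
  have hmono : StrictMono τ := strictMono_nat_of_lt_succ (fun k => (hτ k).1)
  refine ⟨τ, hmono.injective, ?_⟩
  have key : ∀ k k', k < k' → f (τ k) ≠ f (τ k') := by
    intro k k' hkk
    obtain ⟨m, rfl⟩ := Nat.exists_eq_add_of_lt hkk
    exact (hτ (k + m)).2 (τ k) (hmono.monotone (Nat.le_add_right k m))
  intro a b hab
  by_contra hne
  rcases (Ne.lt_or_gt hne) with h | h
  · exact key _ _ h hab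
  · exact key _ _ h hab.symm


/-! ### Combination lemmas -/

lemma G0 (A : ℕ → Set (List ℕ)) (ν : ℕ → ℕ) (hν : Function.Injective ν)
    (y : ℕ → ℕ → List ℕ) (hmem : ∀ j i, y j i ∈ A (ν j))
    (hw : ∀ j i i', i ≠ i' → ¬ Compar (y j i) (y j i'))
    (hc : ∀ j j', j < j' → ∀ i i', ¬ Compar (y j i) (y j' i')) :
    ∃ B : Set (List ℕ), IsAntichain Compar B ∧ {n | (B ∩ A n).Infinite}.Infinite := by
  have hpair : ∀ j i j' i', (j, i) ≠ (j', i') → ¬ Compar (y j i) (y j' i') := by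
    intro j i j' i' hne
    rcases lt_trichotomy j j' with h | rfl | h
    · exact hc _ _ h _ _
    · rcases eq_or_ne i i' with rfl | hii
      · exact absurd rfl hne
      · exact hw _ _ _ hii
    · exact fun hcomp => hc _ _ h i' i (compar_symm hcomp)
  have hyinj : ∀ j, Function.Injective (y j) := by
    intro j i i' hEq
    by_contra hne
    exact hw j i i' hne (hEq ▸ compar_refl _)
  refine ⟨{l | ∃ j i, y j i = l}, ?_, ?_⟩
  · rintro a ⟨j, i, rfl⟩ b ⟨j', i', rfl⟩ hne
    refine hpair j i j' i' (fun hp => hne ?_)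
    rw [Prod.mk.injEq] at hp
    rw [hp.1, hp.2]
  · apply Set.infinite_of_injective_forall_mem hν
    intro j
    apply Set.infinite_of_injective_forall_mem (hyinj j)
    exact fun i => ⟨⟨j, i, rfl⟩, hmem j i⟩

lemma G1 (A : ℕ → Set (List ℕ)) (ν : ℕ → ℕ) (hν : Function.Injective ν)
    (y : ℕ → ℕ → List ℕ) (hmem : ∀ j i, y j i ∈ A (ν j))
    (π : ℕ → ℕ → ℕ) (hπ : ∀ j, StrictMono (π j))
    (H : ∀ j i j' i', π j i ≠ π j' i' → ¬ Compar (y j i) (y j' i')) :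
    ∃ B : Set (List ℕ), IsAntichain Compar B ∧ {n | (B ∩ A n).Infinite}.Infinite := by
  classical
  let jd : ℕ → ℕ := fun k => (Nat.unpair k).1
  let M : ℕ → ℕ := fun k => Nat.rec 0 (fun k' m => π (jd k') (m + 1)) k
  have hM : ∀ k, M (k + 1) = π (jd k) (M k + 1) := fun k => rfl
  have hMlt : ∀ k, M k < M (k + 1) := by
    intro k
    rw [hM k]
    exact lt_of_lt_of_le (Nat.lt_succ_self _) ((hπ (jd k)).le_apply)
  have hMmono : StrictMono M := strictMono_nat_of_lt_succ hMlt
  -- the "value" of step k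
  have hvinj : Function.Injective (fun k => M (k + 1)) := by
    intro a b hab
    exact Nat.succ_injective (hMmono.injective hab)
  refine G0 A ν hν (fun j i => y j (M (Nat.pair j i) + 1))
    (fun j i => hmem _ _) ?_ ?_
  · intro j i i' hne
    apply H
    have : Nat.pair j i ≠ Nat.pair j i' := by
      intro h
      exact hne (by simpa using congrArg (fun k => (Nat.unpair k).2) h)
    intro hEq
    apply hvinj.ne this
    rw [hM, hM]
    simp only [jd, Nat.unpair_pair]
    exact hEq
  · intro j j' hjj i i'
    apply H
    have : Nat.pair j i ≠ Nat.pair j' i' := by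
      intro h
      exact absurd (by simpa using congrArg (fun k => (Nat.unpair k).1) h) hjj.ne
    intro hEq
    apply hvinj.ne this
    rw [hM, hM]
    simp only [jd, Nat.unpair_pair]
    exact hEq


lemma inj_of_strictMono_comp {σ V : ℕ → ℕ} (h : StrictMono fun k => V (σ k)) :
    Function.Injective σ := by
  intro a b hab
  apply h.injective
  show V (σ a) = V (σ b)
  rw [hab]

lemma val_append_last (u : List ℕ) (c : ℕ) : val (u ++ [c]) u.length = c := by
  rw [val, List.getD_eq_getElem _ _ (by simp)]
  simp

/-! ### The trichotomy -/

theorem trichotomy (t : ℕ → List ℕ) (ht : Function.Injective t) :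
    ∃ σ : ℕ → ℕ, Function.Injective σ ∧
      ((∃ q, FanData (fun j => t (σ j)) q) ∨ (ChainData (fun j => t (σ j)) ∨
        ∃ g e, DivData (fun j => t (σ j)) g e)) := by
  classical
  set Lg : List ℕ → Prop := fun u => {j | u <+: t j}.Infinite with hLgdef
  by_cases hAB : ∃ u, Lg u ∧ ∀ c, ¬ Lg (u ++ [c])
  · -- Fan case
    obtain ⟨u, hLgu, hsmall⟩ := hAB
    set q := u.length with hq
    set J : Set ℕ := {j | u <+: t j ∧ q < (t j).length} with hJdef
    have hJ : J.Infinite := by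
      have hFfin : {j | t j = u}.Finite := Set.Subsingleton.finite
        (fun a ha b hb => ht (ha.trans hb.symm))
      apply ((hLgu.diff hFfin).mono ?_)
      rintro j ⟨hj1, hj2⟩
      refine ⟨hj1, ?_⟩
      rcases lt_or_ge q (t j).length with h | h
      · exact h
      · exact absurd (hj1.eq_of_length_le h).symm hj2
    have hext : ∀ j ∈ J, (u ++ [val (t j) q]) <+: t j := by
      rintro j ⟨hj1, hj2⟩
      apply prefix_of_val (by simpa using hj2)
      intro p hp
      simp only [List.length_append, List.length_singleton] at hp
      rcases lt_or_ge p q with h | h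
      · exact (val_prefix (List.prefix_append u [val (t j) q]) h).symm.trans (val_prefix hj1 h)
      · have hpq : p = q := by omega
        subst hpq
        exact val_append_last u _
    have step : ∀ a : {j // j ∈ J}, ∃ b : {j // j ∈ J},
        val (t a.1) q < val (t b.1) q := by
      rintro ⟨a, ha⟩
      set v := val (t a) q with hv
      have hbadfin : {j | j ∈ J ∧ val (t j) q ≤ v}.Finite := by
        have hsub : {j | j ∈ J ∧ val (t j) q ≤ v} ⊆
            ⋃ c ∈ Finset.range (v + 1), {j | (u ++ [c]) <+: t j} := by
          rintro j ⟨hj, hjv⟩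
          exact Set.mem_biUnion (Finset.mem_range.2 (Nat.lt_succ_of_le hjv)) (hext j hj)
        exact (Set.Finite.biUnion (Finset.range (v + 1)).finite_toSet
          (fun c _ => Set.not_infinite.mp (hsmall c))).subset hsub
      obtain ⟨b, hb⟩ := (hJ.diff hbadfin).nonempty
      simp only [Set.mem_diff, Set.mem_setOf_eq, not_and, not_le] at hb
      exact ⟨⟨b, hb.1⟩, hb.2 hb.1⟩
    obtain ⟨f, -, hf⟩ := rec_seq _ ⟨hJ.nonempty.choose, hJ.nonempty.choose_spec⟩ step
    set σ : ℕ → ℕ := fun k => (f k).1 with hσdef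
    have hVmono : StrictMono (fun k => val (t (σ k)) q) :=
      strictMono_nat_of_lt_succ (fun k => hf k)
    refine ⟨σ, inj_of_strictMono_comp (V := fun j => val (t j) q) hVmono, Or.inl ⟨q, ?_, hVmono, ?_⟩⟩
    · exact fun k => (f k).2.2
    · intro i i' p hp
      exact ((val_prefix (f i).2.1 (by omega)).symm.trans (val_prefix (f i').2.1 (by omega)))
  · -- Chain / Div case
    push_neg at hAB
    have hnil : Lg [] := by
      have : {j | [] <+: t j} = Set.univ := by
        ext j; simp [List.nil_prefix]
      rw [hLgdef]
      simp only []
      rw [this]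
      exact Set.infinite_univ
    obtain ⟨U, hU0, hUstep⟩ := rec_seq (fun (a b : {u : List ℕ // Lg u}) =>
      ∃ c, b.1 = a.1 ++ [c]) ⟨[], hnil⟩
      (fun a => by
        obtain ⟨c, hc⟩ := hAB a.1 a.2
        exact ⟨⟨a.1 ++ [c], hc⟩, c, rfl⟩)
    have hUlen : ∀ k, (U k).1.length = k := by
      intro k
      induction k with
      | zero => rw [hU0]; rfl
      | succ k ih =>
        obtain ⟨c, hc⟩ := hUstep k
        rw [hc]; simp [ih]
    have hUchain : ∀ k m, k ≤ m → (U k).1 <+: (U m).1 := by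
      intro k m hkm
      induction m with
      | zero => rw [Nat.le_zero.mp hkm]
      | succ m ih =>
        rcases Nat.lt_or_ge k (m + 1) with h | h
        · obtain ⟨c, hc⟩ := hUstep m
          rw [hc]
          exact (ih (by omega)).trans (List.prefix_append _ _)
        · rw [Nat.le_antisymm hkm h]
    set g : ℕ → ℕ := fun p => val (U (p + 1)).1 p with hgdef
    have hUval : ∀ k p, p < k → val (U k).1 p = g p := by
      intro k p hp
      exact (val_prefix (hUchain (p + 1) k hp) (by rw [hUlen]; omega)).symm
    have hUeq : ∀ l : List ℕ, (∀ p < l.length, val l p = g p) → l = (U l.length).1 := by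
      intro l hl
      apply eq_of_val (by rw [hUlen])
      intro p hp
      rw [hl p hp, hUval l.length p hp]
    set Pref : Set ℕ := {j | t j = (U (t j).length).1} with hPrefdef
    by_cases hPref : Pref.Infinite
    · -- Chain
      have step : ∀ a : {j // j ∈ Pref}, ∃ b : {j // j ∈ Pref},
          (t a.1).length < (t b.1).length := by
        rintro ⟨a, ha⟩
        have hbadfin : {j | j ∈ Pref ∧ (t j).length ≤ (t a).length}.Finite := by
          have hsub : {j | j ∈ Pref ∧ (t j).length ≤ (t a).length} ⊆
              t ⁻¹' ((fun k => (U k).1) '' (Set.Iic (t a).length)) := by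
            rintro j ⟨hj, hjl⟩
            exact ⟨(t j).length, hjl, hj.symm⟩
          exact (((Set.finite_Iic _).image _).preimage ht.injOn).subset hsub
        obtain ⟨b, hb⟩ := (hPref.diff hbadfin).nonempty
        simp only [Set.mem_diff, Set.mem_setOf_eq, not_and, not_le] at hb
        exact ⟨⟨b, hb.1⟩, hb.2 hb.1⟩
      obtain ⟨f, -, hf⟩ := rec_seq _ ⟨hPref.nonempty.choose, hPref.nonempty.choose_spec⟩ step
      set σ : ℕ → ℕ := fun k => (f k).1 with hσdef
      have hLmono : StrictMono (fun k => (t (σ k)).length) :=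
        strictMono_nat_of_lt_succ (fun k => hf k)
      refine ⟨σ, inj_of_strictMono_comp (V := fun j => (t j).length) hLmono,
        Or.inr (Or.inl ?_)⟩
      intro i i' hii
      refine ⟨?_, hLmono hii⟩
      have h1 : t (σ i) = (U (t (σ i)).length).1 := (f i).2
      have h2 : t (σ i') = (U (t (σ i')).length).1 := (f i').2
      show t (σ i) <+: t (σ i')
      rw [h1, h2]
      exact hUchain _ _ (hLmono hii).le
    · -- Div
      have hdiff : ∀ j, j ∉ Pref → ∃ p, p < (t j).length ∧ val (t j) p ≠ g p := by
        intro j hj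
        by_contra hcon
        push_neg at hcon
        exact hj (hUeq (t j) hcon)
      set d : ℕ → ℕ := fun j => if h : ∃ p, p < (t j).length ∧ val (t j) p ≠ g p
        then Nat.find h else 0 with hddef
      have hdspec : ∀ j, j ∉ Pref → d j < (t j).length ∧ val (t j) (d j) ≠ g (d j) ∧
          ∀ p < d j, val (t j) p = g p := by
        intro j hj
        obtain h := hdiff j hj
        rw [hddef]
        simp only [dif_pos h]
        refine ⟨(Nat.find_spec h).1, (Nat.find_spec h).2, ?_⟩
        intro p hp
        have := Nat.find_min h hp
        push_neg at this
        exact this (hp.trans (Nat.find_spec h).1)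
      have step : ∀ a : {j // j ∉ Pref}, ∃ b : {j // j ∉ Pref}, d a.1 < d b.1 := by
        rintro ⟨a, ha⟩
        have hbig : Lg (U (d a + 1)).1 := (U (d a + 1)).2
        have hPreffin : Pref.Finite := Set.not_infinite.mp hPref
        obtain ⟨b, hb⟩ := (hbig.diff hPreffin).nonempty
        refine ⟨⟨b, hb.2⟩, ?_⟩
        have hpre : (U (d a + 1)).1 <+: t b := hb.1
        have hagree : ∀ p, p ≤ d a → val (t b) p = g p := by
          intro p hp
          rw [← val_prefix hpre (by rw [hUlen]; omega)]
          exact hUval _ _ (by omega)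
        by_contra hcon
        push_neg at hcon
        exact (hdspec b hb.2).2.1 (hagree (d b) hcon)
      have hcompl : {j | j ∉ Pref}.Infinite := by
        have := (Set.not_infinite.mp hPref).infinite_compl
        exact this
      obtain ⟨f, -, hf⟩ := rec_seq _ ⟨hcompl.nonempty.choose, hcompl.nonempty.choose_spec⟩ step
      set σ : ℕ → ℕ := fun k => (f k).1 with hσdef
      have hdmono : StrictMono (fun k => d (σ k)) :=
        strictMono_nat_of_lt_succ (fun k => hf k)
      refine ⟨σ, inj_of_strictMono_comp (V := d) hdmono,
        Or.inr (Or.inr ⟨g, fun k => d (σ k), hdmono, ?_⟩)⟩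
      intro k
      obtain ⟨h1, h2, h3⟩ := hdspec (σ k) (f k).2
      exact ⟨h1, h3, h2⟩


/-- every infinite antichain contains a fan-type or a divergence-type sequence -/
lemma fan_or_div (S : Set (List ℕ)) (hA : IsAntichain Compar S) (hS : S.Infinite) :
    (∃ Y q, FanData Y q ∧ ∀ i, Y i ∈ S) ∨ (∃ Y g e, DivData Y g e ∧ ∀ i, Y i ∈ S) := by
  classical
  let emb := hS.natEmbedding
  have ht : Function.Injective (fun j => (emb j).1) := fun a b hab =>
    emb.injective (Subtype.ext hab)
  obtain ⟨σ, hσ, hcase⟩ := trichotomy _ ht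
  rcases hcase with ⟨q, hq⟩ | (hch | ⟨g, e, hd⟩)
  · exact Or.inl ⟨_, q, hq, fun i => (emb (σ i)).2⟩
  · exfalso
    obtain ⟨hpre, hlen⟩ := hch 0 1 zero_lt_one
    have hlen' : ((emb (σ 0) : List ℕ)).length < ((emb (σ 1) : List ℕ)).length := hlen
    have hne : (emb (σ 0)).1 ≠ (emb (σ 1)).1 := by
      intro h
      rw [h] at hlen'
      exact lt_irrefl _ hlen'
    exact hA (emb (σ 0)).2 (emb (σ 1)).2 hne (Or.inl hpre)
  · exact Or.inr ⟨_, g, e, hd, fun i => (emb (σ i)).2⟩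

/-- combining divergence-type sequences whose branches all split off a common branch `G`
at strictly increasing depths -/
lemma branch_blocks (A : ℕ → Set (List ℕ)) (ν : ℕ → ℕ) (hν : Function.Injective ν)
    (X : ℕ → ℕ → List ℕ) (g : ℕ → ℕ → ℕ) (e : ℕ → ℕ → ℕ)
    (hdiv : ∀ s, DivData (X s) (g s) (e s)) (hmem : ∀ s i, X s i ∈ A (ν s))
    (G : ℕ → ℕ) (E : ℕ → ℕ) (hE : StrictMono E)
    (hagree : ∀ s p, p < E s → g s p = G p) (hdiff : ∀ s, g s (E s) ≠ G (E s)) :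
    ∃ B : Set (List ℕ), IsAntichain Compar B ∧ {n | (B ∩ A n).Infinite}.Infinite := by
  have hshift : ∀ s : ℕ, StrictMono (fun i => E s + 1 + i) := fun s a b hab => by dsimp only; omega
  have hdepth : ∀ s i, E s < e s (E s + 1 + i) := by
    intro s i
    have h1 : E s + 1 + i ≤ e s (E s + 1 + i) := (hdiv s).1.le_apply
    omega
  apply G0 A ν hν (fun s i => X s (E s + 1 + i)) (fun s i => hmem _ _)
  · intro s i i' hne
    exact ((hdiv s).comp (hshift s)).not_compar' hne
  · intro s s' hss i i'
    have hd2 := (hdiv s).2 (E s + 1 + i)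
    have hd2' := (hdiv s').2 (E s' + 1 + i')
    apply not_compar (lt_trans (hdepth s i) hd2.1)
      (lt_trans (lt_trans (hE hss) (hdepth s' i')) hd2'.1)
    rw [hd2.2.1 (E s) (hdepth s i), hd2'.2.1 (E s) (lt_trans (hE hss) (hdepth s' i'))]
    rw [hagree s' (E s) (hE hss)]
    exact hdiff s

end Stmt1

/-- For every countable family of infinite antichains `A n` in `ω^{<ω}`, there is an
antichain `B` whose intersection with `A n` is infinite for infinitely many `n`. -/
theorem stmt1 (A : ℕ → Set (List ℕ))
    (hanti : ∀ n, IsAntichain Compar (A n))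
    (hinf : ∀ n, (A n).Infinite) :
    ∃ B : Set (List ℕ), IsAntichain Compar B ∧
      {n | (B ∩ A n).Infinite}.Infinite := by
  classical
  open Stmt1 in
  have key : ∀ n, (∃ Y q, FanData Y q ∧ ∀ i, Y i ∈ A n) ∨
      (∃ Y g e, DivData Y g e ∧ ∀ i, Y i ∈ A n) :=
    fun n => fan_or_div (A n) (hanti n) (hinf n)
  open Stmt1 in
  by_cases hF : {n | ∃ Y q, FanData Y q ∧ ∀ i, Y i ∈ A n}.Infinite
  · -- FAN SIDE
    let emb := hF.natEmbedding
    set ν0 : ℕ → ℕ := fun j => (emb j).1 with hν0def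
    have hν0i : Function.Injective ν0 := fun a b hab => emb.injective (Subtype.ext hab)
    have hdata : ∀ j, ∃ Y q, FanData Y q ∧ ∀ i, Y i ∈ A (ν0 j) := fun j => (emb j).2
    choose Y q hfan hmem using hdata
    set r : ℕ → List ℕ := fun j => (Y j 0).take (q j) with hrdef
    have hrlen : ∀ j, (r j).length = q j := by
      intro j
      simp [hrdef, Nat.min_eq_left ((hfan j).1 0).le]
    have hrval : ∀ j p, p < q j → val (r j) p = val (Y j 0) p := by
      intro j p hp
      exact val_prefix (List.take_prefix _ _) (by rw [hrlen]; exact hp)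
    have hrpre : ∀ j i, r j <+: Y j i := by
      intro j i
      apply prefix_of_val (by rw [hrlen]; exact ((hfan j).1 i).le)
      intro p hp
      rw [hrlen] at hp
      rw [hrval j p hp]
      exact (hfan j).2.2 0 i p hp
    rcases fiber_dichotomy r with ⟨r0, hfib⟩ | ⟨τ, hτ, hrτ⟩
    · -- all fans share the root r0 : greedy
      let emb2 := hfib.natEmbedding
      set τ : ℕ → ℕ := fun j => (emb2 j).1 with hτdef
      have hτi : Function.Injective τ := fun a b hab => emb2.injective (Subtype.ext hab)
      have hQ : ∀ j, q (τ j) = r0.length := by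
        intro j
        have hfj : r (τ j) = r0 := (emb2 j).2
        rw [← hfj, hrlen]
      apply G1 A (fun j => ν0 (τ j)) (hν0i.comp hτi)
        (fun j i => Y (τ j) i) (fun j i => hmem _ _)
        (fun j i => val (Y (τ j) i) r0.length)
      · intro j
        have h := (hfan (τ j)).2.1
        rw [← hQ j]
        exact h
      · intro j i j' i' hne
        apply not_compar (by rw [← hQ j]; exact (hfan (τ j)).1 i)
          (by rw [← hQ j']; exact (hfan (τ j')).1 i') hne
    · -- roots pairwise distinct : structure of the set of roots
      obtain ⟨σ, hσ, hcase⟩ := trichotomy (fun j => r (τ j)) hrτ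
      set Jf : ℕ → ℕ := fun j => τ (σ j) with hJfdef
      have hJinj : Function.Injective (fun j => ν0 (Jf j)) := fun a b hab => by
        exact hσ (hτ (hν0i hab))
      rcases hcase with ⟨Q, hQfan⟩ | (hch | ⟨g, e, hdR⟩)
      · -- Fan of roots
        apply G0 A _ hJinj (fun j i => Y (Jf j) i) (fun j i => hmem _ _)
        · intro j i i' hne
          exact (hfan (Jf j)).not_compar' hne
        · intro j j' hjj i i'
          have hQj : Q < (r (Jf j)).length := hQfan.1 j
          have hQj' : Q < (r (Jf j')).length := hQfan.1 j'
          apply not_compar (lt_of_lt_of_le hQj (hrpre (Jf j) i).length_le)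
            (lt_of_lt_of_le hQj' (hrpre (Jf j') i').length_le)
          rw [← val_prefix (hrpre (Jf j) i) hQj, ← val_prefix (hrpre (Jf j') i') hQj']
          exact hQfan.2.1.injective.ne hjj.ne
      · -- Chain of roots
        set bad : ℕ → ℕ := fun j => val (r (Jf (j + 1))) (q (Jf j)) with hbaddef
        apply G0 A _ hJinj (fun j i => Y (Jf j) (bad j + 1 + i)) (fun j i => hmem _ _)
        · intro j i i' hne
          exact (hfan (Jf j)).not_compar' (by omega : bad j + 1 + i ≠ bad j + 1 + i')
        · intro j j' hjj i i'
          have hlen1 : q (Jf j) < (Y (Jf j) (bad j + 1 + i)).length := (hfan (Jf j)).1 _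
          have hrjj' : (r (Jf j)).length < (r (Jf j')).length := (hch j j' hjj).2
          have hlen2 : q (Jf j) < (Y (Jf j') (bad j' + 1 + i')).length := by
            calc q (Jf j) = (r (Jf j)).length := (hrlen _).symm
              _ < (r (Jf j')).length := hrjj'
              _ ≤ _ := (hrpre (Jf j') _).length_le
          apply not_compar hlen1 hlen2
          have hxval : bad j < val (Y (Jf j) (bad j + 1 + i)) (q (Jf j)) := by
            have h1 : bad j + 1 + i ≤ val (Y (Jf j) (bad j + 1 + i)) (q (Jf j)) :=
              (hfan (Jf j)).2.1.le_apply
            omega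
          have hyval : val (Y (Jf j') (bad j' + 1 + i')) (q (Jf j)) = bad j := by
            have hq1 : q (Jf j) < (r (Jf j')).length := by
              rw [← hrlen (Jf j)]
              exact hrjj'
            rw [← val_prefix (hrpre (Jf j') _) hq1]
            rcases eq_or_lt_of_le (Nat.succ_le_of_lt hjj) with h | h
            · rw [← h]
            · have hq2 : q (Jf j) < (r (Jf (j + 1))).length :=
                calc q (Jf j) = (r (Jf j)).length := (hrlen _).symm
                  _ < _ := (hch j (j + 1) (Nat.lt_succ_self j)).2
              rw [← val_prefix ((hch (j + 1) j' h).1) hq2]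
          rw [hyval]
          omega
      · -- Div of roots
        apply G0 A _ hJinj (fun j i => Y (Jf j) i) (fun j i => hmem _ _)
        · intro j i i' hne
          exact (hfan (Jf j)).not_compar' hne
        · intro j j' hjj i i'
          have he1 : e j < (r (Jf j)).length := (hdR.2 j).1
          have he2 : e j < (r (Jf j')).length := lt_trans (hdR.1 hjj) (hdR.2 j').1
          apply not_compar (lt_of_lt_of_le he1 (hrpre (Jf j) i).length_le)
            (lt_of_lt_of_le he2 (hrpre (Jf j') i').length_le)
          rw [← val_prefix (hrpre (Jf j) i) he1, ← val_prefix (hrpre (Jf j') i') he2]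
          rw [(hdR.2 j').2.1 (e j) (hdR.1 hjj)]
          exact (hdR.2 j).2.2
  · -- BRANCH SIDE
    have hD : {n | ∃ Y g e, DivData Y g e ∧ ∀ i, Y i ∈ A n}.Infinite := by
      apply ((Set.not_infinite.mp hF).infinite_compl).mono
      intro n hn
      rcases key n with h | h
      · exact absurd h hn
      · exact h
    let emb := hD.natEmbedding
    set ν0 : ℕ → ℕ := fun j => (emb j).1 with hν0def
    have hν0i : Function.Injective ν0 := fun a b hab => emb.injective (Subtype.ext hab)
    have hdata : ∀ j, ∃ Y g e, DivData Y g e ∧ ∀ i, Y i ∈ A (ν0 j) := fun j => (emb j).2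
    choose X g e hdv hmem using hdata
    rcases fiber_dichotomy g with ⟨Gf, hfib⟩ | ⟨τ, hτ, hgτ⟩
    · -- all branches equal Gf : greedy
      let emb2 := hfib.natEmbedding
      set τ : ℕ → ℕ := fun j => (emb2 j).1 with hτdef
      have hτi : Function.Injective τ := fun a b hab => emb2.injective (Subtype.ext hab)
      have hGf : ∀ j, g (τ j) = Gf := fun j => (emb2 j).2
      have keylt : ∀ j i j' i', e (τ j) i < e (τ j') i' →
          ¬ Compar (X (τ j) i) (X (τ j') i') := by
        intro j i j' i' hlt
        have h1 := (hdv (τ j)).2 i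
        have h2 := (hdv (τ j')).2 i'
        apply not_compar h1.1 (lt_trans hlt h2.1)
        rw [h2.2.1 _ hlt, hGf j', ← hGf j]
        exact h1.2.2
      apply G1 A (fun j => ν0 (τ j)) (hν0i.comp hτi)
        (fun j i => X (τ j) i) (fun j i => hmem _ _)
        (fun j i => e (τ j) i) (fun j => (hdv (τ j)).1)
      intro j i j' i' hne
      rcases hne.lt_or_gt with h | h
      · exact keylt _ _ _ _ h
      · exact fun hc => keylt _ _ _ _ h (compar_symm hc)
    · -- branches pairwise distinct : truncate and apply trichotomy
      set ρ : ℕ → List ℕ := fun j => List.ofFn (fun i : Fin (j + 1) => g (τ j) i) with hρdef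
      have hρlen : ∀ j, (ρ j).length = j + 1 := by
        intro j
        simp [hρdef]
      have hρval : ∀ j p, p < j + 1 → val (ρ j) p = g (τ j) p := by
        intro j p hp
        rw [val, List.getD_eq_getElem _ _ (by rw [hρlen]; exact hp)]
        simp only [hρdef, List.getElem_ofFn]
      have hρinj : Function.Injective ρ := by
        intro a b hab
        have h := congrArg List.length hab
        rw [hρlen, hρlen] at h
        omega
      obtain ⟨σ, hσ, hcase⟩ := trichotomy ρ hρinj
      set Jb : ℕ → ℕ := fun j => τ (σ j) with hJbdef
      have hJinj : Function.Injective (fun j => ν0 (Jb j)) := fun a b hab => by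
        exact hσ (hτ (hν0i hab))
      rcases hcase with ⟨Q, hQfan⟩ | (hch | ⟨G, E, hdR⟩)
      · -- Fan of truncations : branches pairwise split at the common position Q
        have hQlt : ∀ j, Q < σ j + 1 := by
          intro j
          have := hQfan.1 j
          rwa [hρlen] at this
        have hdepth : ∀ j i, Q < e (Jb j) (Q + 1 + i) := by
          intro j i
          have h1 : Q + 1 + i ≤ e (Jb j) (Q + 1 + i) := (hdv (Jb j)).1.le_apply
          omega
        have hvalQ : ∀ j i, val (X (Jb j) (Q + 1 + i)) Q = val (ρ (σ j)) Q := by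
          intro j i
          rw [((hdv (Jb j)).2 (Q + 1 + i)).2.1 Q (hdepth j i), hρval (σ j) Q (hQlt j)]
        have hshift : ∀ j : ℕ, StrictMono (fun i => Q + 1 + i) :=
          fun j a b hab => by dsimp only; omega
        apply G0 A _ hJinj (fun j i => X (Jb j) (Q + 1 + i)) (fun j i => hmem _ _)
        · intro j i i' hne
          exact ((hdv (Jb j)).comp (hshift j)).not_compar' hne
        · intro j j' hjj i i'
          apply not_compar (lt_trans (hdepth j i) ((hdv (Jb j)).2 _).1)
            (lt_trans (hdepth j' i') ((hdv (Jb j')).2 _).1)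
          rw [hvalQ j i, hvalQ j' i']
          exact hQfan.2.1.injective.ne hjj.ne
      · -- Chain of truncations : branches converge to a limit branch Gl
        have hσmono : StrictMono σ := by
          intro a b hab
          have h := (hch a b hab).2
          rw [hρlen, hρlen] at h
          omega
        set Gl : ℕ → ℕ := fun p => g (Jb p) p with hGldef
        have hcoh : ∀ j p, p < σ j + 1 → g (Jb j) p = Gl p := by
          intro j p hp
          have hplt : p < σ p + 1 := by
            have hle : p ≤ σ p := hσmono.le_apply
            omega
          rcases lt_trichotomy j p with h | h | h
          · rw [show g (Jb j) p = val (ρ (σ j)) p from (hρval (σ j) p hp).symm,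
              show Gl p = val (ρ (σ p)) p from (hρval (σ p) p hplt).symm]
            exact val_prefix (hch j p h).1 (by rw [hρlen]; exact hp)
          · rw [h]
          · rw [show g (Jb j) p = val (ρ (σ j)) p from (hρval (σ j) p hp).symm,
              show Gl p = val (ρ (σ p)) p from (hρval (σ p) p hplt).symm]
            exact (val_prefix (hch p j h).1 (by rw [hρlen]; exact hplt)).symm
        have hgginj : Function.Injective (fun j => g (Jb j)) := fun a b hab => by
          exact hσ (hgτ hab)
        have hj0 : ∃ j₀, ∀ k, g (Jb (k + j₀)) ≠ Gl := by
          by_cases hex : ∃ js, g (Jb js) = Gl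
          · obtain ⟨js, hjs⟩ := hex
            refine ⟨js + 1, fun k hk => ?_⟩
            have h : k + (js + 1) = js := hgginj (hk.trans hjs.symm)
            omega
          · push_neg at hex
            exact ⟨0, fun k => hex _⟩
        obtain ⟨j₀, hj₀⟩ := hj0
        have hexd : ∀ k, ∃ p, g (Jb (k + j₀)) p ≠ Gl p :=
          fun k => Function.ne_iff.mp (hj₀ k)
        set E : ℕ → ℕ := fun k => Nat.find (hexd k) with hEdef
        have hEspec : ∀ k, g (Jb (k + j₀)) (E k) ≠ Gl (E k) := fun k => Nat.find_spec (hexd k)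
        have hEmin : ∀ k p, p < E k → g (Jb (k + j₀)) p = Gl p := by
          intro k p hp
          have := Nat.find_min (hexd k) hp
          exact not_not.mp this
        have hEgt : ∀ k, k < E k := by
          intro k
          by_contra hcon
          push_neg at hcon
          apply hEspec k
          apply hcoh (k + j₀) (E k)
          have hle : k + j₀ ≤ σ (k + j₀) := hσmono.le_apply
          omega
        set τ2 : ℕ → ℕ := fun s => Nat.rec 0 (fun _ m => E m + 1) s with hτ2def
        have hτ2succ : ∀ s, τ2 (s + 1) = E (τ2 s) + 1 := fun s => rfl
        have hE2mono : StrictMono (fun s => E (τ2 s)) := by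
          apply strictMono_nat_of_lt_succ
          intro s
          rw [hτ2succ]
          have := hEgt (E (τ2 s) + 1)
          omega
        have hτ2mono : StrictMono τ2 := by
          apply strictMono_nat_of_lt_succ
          intro s
          rw [hτ2succ]
          have := hEgt (τ2 s)
          omega
        have hidx : Function.Injective (fun s => τ2 s + j₀) := fun a b hab => by
          have hab' : τ2 a + j₀ = τ2 b + j₀ := hab
          exact hτ2mono.injective (by omega)
        apply branch_blocks A (fun s => ν0 (Jb (τ2 s + j₀)))
          (fun a b hab => hidx (hσ (hτ (hν0i hab))))
          (fun s i => X (Jb (τ2 s + j₀)) i) (fun s => g (Jb (τ2 s + j₀)))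
          (fun s i => e (Jb (τ2 s + j₀)) i)
          (fun s => hdv _) (fun s i => hmem _ _) Gl (fun s => E (τ2 s)) hE2mono
          (fun s p hp => hEmin (τ2 s) p hp) (fun s => hEspec (τ2 s))
      · -- Div of truncations
        have hElt : ∀ j, E j < σ j + 1 := by
          intro j
          have := (hdR.2 j).1
          rwa [hρlen] at this
        apply branch_blocks A (fun j => ν0 (Jb j)) hJinj
          (fun j i => X (Jb j) i) (fun j => g (Jb j)) (fun j => e (Jb j))
          (fun j => hdv _) (fun j i => hmem _ _) G E hdR.1
        · intro j p hp
          rw [← hρval (σ j) p (by have := hElt j; omega)]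
          exact (hdR.2 j).2.1 p hp
        · intro j
          rw [← hρval (σ j) (E j) (hElt j)]
          exact (hdR.2 j).2.2
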